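/- Let ψ_i(x) = x − g_i(x), where g_i is defined by the backward recursion g_N(x) = f'(x)/(R + f''(x)), g_l(x) = (f'(x) + R·g_{l+1}(x))/(R + f''(x)), f is three times differentiable, R > 0, f'(x*) = 0 and f''(x*) > 0. Then ψ_i'(x*) = (R/(R + f''(x*)))^{N−i+1} for each i = 0, ..., N, and 0 < ψ_i'(x*) < 1. -/

import Mathlib

/-- ψ_i'(x*) = (R/(R + f''(x*)))^(N−i+1) ∈ (0,1). -/
theorem stmt7 (f : ℝ → ℝ) (hf : ContDiff ℝ 3 f) (R : ℝ) (hR : 0 < R) (N : ℕ)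
    (g : ℕ → ℝ → ℝ)
    (hgN : ∀ x : ℝ, g N x = deriv f x / (R + deriv (deriv f) x))
    (hrec : ∀ l < N, ∀ x : ℝ,
      g l x = (deriv f x + R * g (l + 1) x) / (R + deriv (deriv f) x))
    (xs : ℝ) (hxs : deriv f xs = 0) (hf2 : 0 < deriv (deriv f) xs) :
    ∀ i ≤ N,
      deriv (fun x => x - g i x) xs = (R / (R + deriv (deriv f) xs)) ^ (N - i + 1) ∧
      0 < deriv (fun x => x - g i x) xs ∧ deriv (fun x => x - g i x) xs < 1 := by
  set c : ℝ := R + deriv (deriv f) xs with hc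
  have hcpos : 0 < c := by positivity
  have hcne : c ≠ 0 := ne_of_gt hcpos
  set s : ℝ := R / c with hs
  have hs0 : 0 < s := div_pos hR hcpos
  have hs1 : s < 1 := by
    rw [hs, div_lt_one hcpos, hc]; linarith
  -- differentiability facts
  have hf1 : ContDiff ℝ 2 (deriv f) := by
    have := hf.iterate_deriv' 2 1
    simpa using this
  have hf2' : ContDiff ℝ 1 (deriv (deriv f)) := by
    have := hf.iterate_deriv' 1 2
    simpa [Function.iterate_succ, Function.comp] using this
  have h2 : HasDerivAt (deriv f) (deriv (deriv f) xs) xs :=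
    ((hf1.differentiable (by norm_num)) xs).hasDerivAt
  have h3 : HasDerivAt (deriv (deriv f)) (deriv (deriv (deriv f)) xs) xs :=
    ((hf2'.differentiable one_ne_zero) xs).hasDerivAt
  have hD : HasDerivAt (fun x => R + deriv (deriv f) x) (deriv (deriv (deriv f)) xs) xs := by
    have := (hasDerivAt_const xs R).add h3
    rw [zero_add] at this
    exact this
  -- quotient derivative helper
  have hquot : ∀ (num : ℝ → ℝ) (d : ℝ), num xs = 0 → HasDerivAt num d xs →
      HasDerivAt (fun x => num x / (R + deriv (deriv f) x)) (d / c) xs := by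
    intro num d h0 hd
    have := hd.div hD hcne
    refine this.congr_deriv ?_
    rw [h0]
    field_simp
    ring
  -- main induction: for i with i + k = N, g i xs = 0 and HasDerivAt (g i) (1 - s^(N-i+1)) xs
  have main : ∀ k i, i + k = N → g i xs = 0 ∧ HasDerivAt (g i) (1 - s ^ (N - i + 1)) xs := by
    intro k
    induction k with
    | zero =>
      intro i hi
      simp only [Nat.add_zero] at hi
      subst hi
      have hfun : g i = fun x => deriv f x / (R + deriv (deriv f) x) := funext hgN
      constructor
      · rw [hgN, hxs, zero_div]
      · rw [hfun, Nat.sub_self]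
        have := hquot (deriv f) (deriv (deriv f) xs) hxs h2
        convert this using 1
        rw [hs, hc]
        field_simp
        rw [zero_add, pow_one, mul_sub, mul_one, mul_div_cancel₀ _ (show R + deriv (deriv f) xs ≠ 0 from hcne)]
        ring
    | succ k ih =>
      intro i hi
      have hiN : i < N := by omega
      obtain ⟨hz, hd⟩ := ih (i + 1) (by omega)
      have hfun : g i = fun x => (deriv f x + R * g (i + 1) x) / (R + deriv (deriv f) x) :=
        funext (hrec i hiN)
      have hnum : HasDerivAt (fun x => deriv f x + R * g (i + 1) x)
          (deriv (deriv f) xs + R * (1 - s ^ (N - (i + 1) + 1))) xs :=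
        h2.add ((hd.const_mul R))
      have h0 : deriv f xs + R * g (i + 1) xs = 0 := by rw [hxs, hz]; ring
      constructor
      · rw [hrec i hiN, h0, zero_div]
      · rw [hfun]
        have := hquot _ _ h0 hnum
        convert this using 1
        have hexp : N - i + 1 = (N - (i + 1) + 1) + 1 := by omega
        rw [hexp, pow_succ]
        rw [hs, hc]
        field_simp
        ring
  intro i hi
  obtain ⟨hz, hd⟩ := main (N - i) i (by omega)
  have hpsi : HasDerivAt (fun x => x - g i x) (s ^ (N - i + 1)) xs := by
    have := (hasDerivAt_id xs).sub hd
    refine this.congr_deriv ?_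
    ring
  rw [hpsi.deriv]
  refine ⟨rfl, pow_pos hs0 _, pow_lt_one₀ (le_of_lt hs0) hs1 (by omega)⟩
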